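/- Malani's generating relation: for real d with d ≠ 1/2, real y, any eventually-zero sequence (A_m) of reals, and real x with 0 < |x| < 1, Σ_{n≥0} [(d)_n (d+1/2)_n / ((3/2)_n n!)] x^{2n} Σ_{m=0}^{n} A_m (−n)_m (−n−1/2)_m / m! · y^m = (1/(2x(1−2d)))(1+x)^{1−2d} Σ_{n≥0} A_n (d)_n (d−1/2)_n / n! · (x² y/(1+x)²)^n − (1/(2x(1−2d)))(1−x)^{1−2d} Σ_{n≥0} A_n (d)_n (d−1/2)_n / n! · (x² y/(1−x)²)^n. -/

import Mathlib

set_option maxHeartbeats 1000000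

open Finset Filter

/-- Pochhammer (rising factorial) for real `a`. -/
noncomputable def poch (a : ℝ) (n : ℕ) : ℝ := (ascPochhammer ℝ n).eval a

/-- generalized binomial coefficient -/
noncomputable def binc (r : ℝ) (k : ℕ) : ℝ := (∏ i ∈ Finset.range k, (r - i)) / k.factorial

/-- generalized binomial coefficient -/

lemma binc_zero (r : ℝ) : binc r 0 = 1 := by simp [binc]

lemma binc_succ (r : ℝ) (k : ℕ) : binc r (k+1) = binc r k * (r - k) / (k+1) := by
  have hk : (k.factorial : ℝ) ≠ 0 := Nat.cast_ne_zero.2 k.factorial_ne_zero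
  have hk1 : ((k:ℝ)+1) ≠ 0 := by positivity
  rw [binc, binc, Finset.prod_range_succ, Nat.factorial_succ]
  push_cast
  rw [div_mul_eq_mul_div, div_div, mul_comm ((k:ℝ)+1)]

lemma binc_first (r : ℝ) (k : ℕ) : ((k:ℝ)+1) * binc r (k+1) = r * binc (r-1) k := by
  have hk : (k.factorial : ℝ) ≠ 0 := Nat.cast_ne_zero.2 k.factorial_ne_zero
  have hk1 : ((k:ℝ)+1) ≠ 0 := by positivity
  rw [binc, binc, Finset.prod_range_succ', Nat.factorial_succ]
  have : ∀ i : ℕ, r - (↑(i+1) : ℝ) = (r-1) - i := by intro i; push_cast; ring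
  simp only [this]
  push_cast
  field_simp
  ring

lemma binc_pascal (r : ℝ) (k : ℕ) : binc r (k+1) = binc (r-1) (k+1) + binc (r-1) k := by
  have hk1 : ((k:ℝ)+1) ≠ 0 := by positivity
  have h1 := binc_first r k
  have h2 := binc_succ (r-1) k
  have h3 : binc r (k+1) = r * binc (r-1) k / ((k:ℝ)+1) := by
    field_simp at h1 ⊢; linarith [h1]
  rw [h3, h2]
  field_simp
  ring

lemma summable_binc_abs (r : ℝ) {ρ : ℝ} (h0 : 0 ≤ ρ) (h1 : ρ < 1) :
    Summable (fun k => |binc r k| * ρ ^ k) := by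
  set l : ℝ := (1 + ρ) / 2 with hl
  have hρl : ρ < l := by rw [hl]; linarith
  have hl1 : l < 1 := by rw [hl]; linarith
  have hl0 : 0 < l := by rw [hl]; linarith
  apply summable_of_ratio_norm_eventually_le hl1
  obtain ⟨K, hK⟩ := exists_nat_ge (ρ * |r| / (l - ρ))
  rw [eventually_atTop]
  refine ⟨K, fun k hk => ?_⟩
  have hk1 : (0:ℝ) < (k:ℝ)+1 := by positivity
  rw [Real.norm_eq_abs, Real.norm_eq_abs, abs_of_nonneg (by positivity),
    abs_of_nonneg (by positivity : (0:ℝ) ≤ |binc r k| * ρ ^ k)]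
  have habs : |binc r (k+1)| * ρ^(k+1) = (|binc r k| * ρ^k) * (|r - k| * ρ / (k+1)) := by
    rw [binc_succ, abs_div, abs_mul, abs_of_pos hk1, pow_succ]
    ring
  have hrk : |r - (k:ℝ)| ≤ |r| + k := by
    have := abs_add_le r (-(k:ℝ))
    rw [abs_neg, abs_of_nonneg (show (0:ℝ) ≤ (k:ℝ) by positivity)] at this
    simpa [sub_eq_add_neg] using this
  have key : |r - (k:ℝ)| * ρ / (k+1) ≤ l := by
    rw [div_le_iff₀ hk1]
    have h2 : ρ * |r| ≤ (K:ℝ) * (l - ρ) := by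
      rw [div_le_iff₀ (by linarith)] at hK; linarith
    have h3 : (K:ℝ) ≤ k := Nat.cast_le.2 hk
    have h4 : (K:ℝ) * (l - ρ) ≤ (k:ℝ) * (l - ρ) := by
      apply mul_le_mul_of_nonneg_right h3; linarith
    nlinarith [abs_nonneg r, h0]
  calc |binc r (k+1)| * ρ^(k+1) = (|binc r k| * ρ^k) * (|r - k| * ρ / (k+1)) := habs
    _ ≤ (|binc r k| * ρ^k) * l := mul_le_mul_of_nonneg_left key (by positivity)
    _ = l * (|binc r k| * ρ^k) := by ring

lemma summable_binc (r x : ℝ) (hx : |x| < 1) : Summable (fun k => binc r k * x ^ k) := by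
  rw [← summable_abs_iff]
  have h : ∀ k, |binc r k * x ^ k| = |binc r k| * |x| ^ k := by
    intro k; rw [abs_mul, abs_pow]
  simp only [h]
  exact summable_binc_abs r (abs_nonneg x) hx

lemma eq_at_zero_of_deriv_zero {F : ℝ → ℝ} (h : ∀ y ∈ Set.Ioo (-1:ℝ) 1, HasDerivAt F 0 y)
    {x : ℝ} (hx : |x| < 1) : F x = F 0 := by
  rw [abs_lt] at hx
  rcases le_or_gt 0 x with h0 | h0
  · have hsub : Set.Icc (0:ℝ) x ⊆ Set.Ioo (-1) 1 :=
      fun z hz => ⟨by linarith [hz.1], lt_of_le_of_lt hz.2 hx.2⟩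
    exact constant_of_has_deriv_right_zero
      (fun z hz => ((h z (hsub hz)).continuousAt.continuousWithinAt))
      (fun z hz => (h z (hsub (Set.Ico_subset_Icc_self hz))).hasDerivWithinAt)
      x (Set.right_mem_Icc.2 h0)
  · have hsub : Set.Icc x (0:ℝ) ⊆ Set.Ioo (-1) 1 :=
      fun z hz => ⟨lt_of_lt_of_le hx.1 hz.1, by linarith [hz.2]⟩
    exact (constant_of_has_deriv_right_zero
      (fun z hz => ((h z (hsub hz)).continuousAt.continuousWithinAt))
      (fun z hz => (h z (hsub (Set.Ico_subset_Icc_self hz))).hasDerivWithinAt)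
      0 (Set.right_mem_Icc.2 h0.le)).symm

theorem hasSum_binc (r : ℝ) {x : ℝ} (hx : |x| < 1) :
    HasSum (fun k => binc r k * x ^ k) ((1 + x) ^ r) := by
  set G : ℝ → ℝ := fun y => ∑' k, binc r k * y ^ k with hGdef
  -- termwise derivative identity
  have e1 : ∀ (y : ℝ) (k : ℕ), binc r (k+1) * (((k:ℝ)+1) * y^k) = r * (binc (r-1) k * y^k) := by
    intro y k
    linear_combination (y^k) * binc_first r k
  -- derivative of G
  have hderiv : ∀ y, |y| < 1 →
      HasDerivAt G (r * ∑' k, binc (r-1) k * y ^ k) y := by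
    intro y hy
    set ρ : ℝ := (|y| + 1) / 2 with hρdef
    have hyρ : |y| < ρ := by rw [hρdef]; linarith
    have hρ0 : 0 < ρ := lt_of_le_of_lt (abs_nonneg y) hyρ
    have hρ1 : ρ < 1 := by rw [hρdef]; linarith
    have hu : Summable (fun k => |binc r k| * k * ρ ^ (k-1)) := by
      rw [← summable_nat_add_iff 1]
      have he : ∀ k : ℕ, |binc r (k+1)| * (↑(k+1):ℝ) * ρ ^ (k+1-1)
          = |r| * (|binc (r-1) k| * ρ^k) := by
        intro k
        have h := binc_first r k
        have : |((k:ℝ)+1) * binc r (k+1)| = |r * binc (r-1) k| := by rw [h]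
        rw [abs_mul, abs_mul, abs_of_pos (show (0:ℝ) < (k:ℝ)+1 by positivity)] at this
        push_cast
        linear_combination (ρ^k) * this
      simp only [he]
      exact ((summable_binc_abs (r-1) hρ0.le hρ1).mul_left |r|)
    have hD := hasDerivAt_tsum_of_isPreconnected hu (isOpen_Ioo (a := -ρ) (b := ρ))
      ((convex_Ioo (-ρ) ρ).isPreconnected)
      (g := fun k z => binc r k * z^k) (g' := fun k z => binc r k * ((k:ℝ) * z^(k-1)))
      (fun k z _ => (hasDerivAt_pow k z).const_mul (binc r k))
      (fun k z hz => by
        have hzρ : |z| ≤ ρ := le_of_lt (abs_lt.2 ⟨hz.1, hz.2⟩)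
        rw [Real.norm_eq_abs, abs_mul, abs_mul, abs_pow]
        calc |binc r k| * (|(k:ℝ)| * |z|^(k-1))
            ≤ |binc r k| * ((k:ℝ) * ρ^(k-1)) := by
              apply mul_le_mul_of_nonneg_left _ (abs_nonneg _)
              apply mul_le_mul (le_of_eq (abs_of_nonneg (by positivity)))
                (pow_le_pow_left₀ (abs_nonneg z) hzρ _) (by positivity) (by positivity)
          _ = |binc r k| * (k:ℝ) * ρ^(k-1) := by ring)
      (show (0:ℝ) ∈ Set.Ioo (-ρ) ρ by constructor <;> simp [hρ0] <;> linarith)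
      (summable_of_ne_finset_zero (s := {0}) (fun k hk => by
        have : k ≠ 0 := by simpa using hk
        simp [zero_pow this]))
      (show y ∈ Set.Ioo (-ρ) ρ from abs_lt.1 hyρ)
    have hsum' : Summable (fun k => binc r k * ((k:ℝ) * y^(k-1))) := by
      rw [← summable_nat_add_iff 1]
      have he : ∀ k : ℕ, binc r (k+1) * ((↑(k+1):ℝ) * y^(k+1-1))
          = r * (binc (r-1) k * y^k) := by
        intro k; push_cast; exact e1 y k
      simp only [he]
      exact (summable_binc (r-1) y (lt_trans hyρ hρ1)).mul_left r
    have hval : (∑' k, binc r k * ((k:ℝ) * y^(k-1))) = r * ∑' k, binc (r-1) k * y ^ k := by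
      rw [Summable.tsum_eq_zero_add hsum']
      simp only [Nat.cast_zero, Nat.cast_add, Nat.cast_one]
      have he : ∀ k : ℕ, binc r (k+1) * (((k:ℝ)+1) * y^(k+1-1)) = r * (binc (r-1) k * y^k) := by
        intro k; rw [Nat.add_sub_cancel]; exact e1 y k
      simp only [he]
      rw [tsum_mul_left]
      simp
    rw [← hval]
    exact hD
  -- ODE
  have hODE : ∀ y, |y| < 1 → (1+y) * (∑' k, binc (r-1) k * y ^ k) = G y := by
    intro y hy
    set H := ∑' k, binc (r-1) k * y ^ k with hH
    have hs0 : Summable (fun k => binc (r-1) k * y ^ k) := summable_binc (r-1) y hy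
    have hs1 : Summable (fun k => binc (r-1) (k+1) * y ^ (k+1)) :=
      (summable_nat_add_iff 1).2 hs0
    have hs2 : Summable (fun k => binc (r-1) k * y ^ (k+1)) := by
      have : ∀ k : ℕ, binc (r-1) k * y ^ (k+1) = y * (binc (r-1) k * y^k) := by
        intro k; rw [pow_succ]; ring
      simp only [this]
      exact hs0.mul_left y
    have hGy : G y = binc r 0 * y ^ 0 + ∑' k, binc r (k+1) * y ^ (k+1) :=
      Summable.tsum_eq_zero_add (summable_binc r y hy)
    have hHy : H = binc (r-1) 0 * y ^ 0 + ∑' k, binc (r-1) (k+1) * y ^ (k+1) :=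
      Summable.tsum_eq_zero_add hs0
    have hyH : y * H = ∑' k, binc (r-1) k * y ^ (k+1) := by
      rw [hH, ← tsum_mul_left]
      apply tsum_congr; intro k; rw [pow_succ]; ring
    have hsplit : ∀ k : ℕ, binc r (k+1) * y ^ (k+1)
        = binc (r-1) (k+1) * y ^ (k+1) + binc (r-1) k * y ^ (k+1) := by
      intro k; rw [binc_pascal]; ring
    rw [hGy]
    simp only [hsplit]
    rw [Summable.tsum_add hs1 hs2, binc_zero]
    rw [← hyH]
    have : binc (r-1) 0 = 1 := binc_zero _
    nlinarith [hHy, this]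
  -- F is constant
  set F : ℝ → ℝ := fun z => G z * (1+z) ^ (-r) with hFdef
  have hFderiv : ∀ y ∈ Set.Ioo (-1:ℝ) 1, HasDerivAt F 0 y := by
    intro y hy
    have hy1 : |y| < 1 := abs_lt.2 ⟨hy.1, hy.2⟩
    have h1y : (0:ℝ) < 1 + y := by have := abs_lt.1 hy1; linarith [this.1]
    have hgd := hderiv y hy1
    have hpd : HasDerivAt (fun z : ℝ => (1+z) ^ (-r)) (-r * (1+y)^(-r-1)) y := by
      have h := Real.hasDerivAt_rpow_const (x := 1+y) (p := -r) (Or.inl h1y.ne')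
      have hid : HasDerivAt (fun z : ℝ => 1 + z) 1 y := (hasDerivAt_id y).const_add 1
      have h2 := h.comp y hid; rw [mul_one] at h2; exact h2
    have hmul := hgd.mul hpd
    have hzero : (r * ∑' k, binc (r-1) k * y ^ k) * (1+y)^(-r) + G y * (-r * (1+y)^(-r-1)) = 0 := by
      have e2 : (1+y)^(-r) = (1+y)^(-r-1) * (1+y) := by
        have := Real.rpow_add_one h1y.ne' (-r-1)
        rw [show -r-1+1 = -r by ring] at this
        exact this
      rw [e2]
      linear_combination (r * (1+y)^(-r-1)) * hODE y hy1
    rw [hzero] at hmul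
    exact hmul
  have hF0 : F 0 = 1 := by
    have hG0 : G 0 = 1 := by
      have h00 : G 0 = ∑' k, binc r k * (0:ℝ)^k := rfl
      rw [h00, tsum_eq_single 0 (fun k hk => by simp [zero_pow hk])]
      simp [binc_zero]
    rw [hFdef]
    simp [hG0, Real.one_rpow]
  have hFx : F x = 1 := by rw [eq_at_zero_of_deriv_zero hFderiv hx, hF0]
  have h1x : (0:ℝ) < 1 + x := by have := abs_lt.1 hx; linarith [this.1]
  have hGx : G x = (1 + x) ^ r := by
    have hne : (1+x) ^ r ≠ 0 := (Real.rpow_pos_of_pos h1x r).ne'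
    rw [hFdef] at hFx
    simp only at hFx
    rw [Real.rpow_neg h1x.le] at hFx
    field_simp at hFx
    exact hFx
  rw [← hGx]
  exact (summable_binc r x hx).hasSum

lemma poch_zero (a : ℝ) : poch a 0 = 1 := by simp [poch]

lemma poch_succ (a : ℝ) (n : ℕ) : poch a (n+1) = poch a n * (a + n) := by
  simp [poch, ascPochhammer_succ_eval]

lemma poch_add (a : ℝ) (p q : ℕ) : poch a (p + q) = poch a p * poch (a + p) q := by
  induction q with
  | zero => simp [poch_zero]
  | succ q ih =>
    rw [show p + (q+1) = (p+q)+1 from rfl, poch_succ, ih, poch_succ]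
    push_cast
    ring

lemma poch_neg_zero {n m : ℕ} (h : n < m) : poch (-(n:ℝ)) m = 0 :=
  ascPochhammer_eval_neg_coe_nat_of_lt h

lemma poch_pos {a : ℝ} (ha : 0 < a) (n : ℕ) : 0 < poch a n :=
  ascPochhammer_pos n a ha

lemma poch_dup (a : ℝ) (n : ℕ) : poch a n * poch (a + 1/2) n * 4^n = poch (2*a) (2*n) := by
  induction n with
  | zero => simp [poch_zero]
  | succ n ih =>
    rw [show 2*(n+1) = (2*n+1)+1 by ring, poch_succ, poch_succ, poch_succ, poch_succ]
    push_cast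
    linear_combination (4*(a+(n:ℝ))*(a+1/2+(n:ℝ))) * ih

lemma poch_neg_fac : ∀ (K : ℕ) (L N : ℕ), K + L = N →
    poch (-(N:ℝ)) K * L.factorial = (-1)^K * N.factorial := by
  intro K
  induction K with
  | zero => intro L N h; subst h; simp [poch_zero]
  | succ K ih =>
    intro L N h
    have hIH := ih (L+1) N (by omega)
    have hN : (N:ℝ) = (K:ℝ) + 1 + L := by
      have : N = K + 1 + L := by omega
      rw [this]; push_cast; ring
    rw [poch_succ]
    push_cast [Nat.factorial_succ] at hIH ⊢
    linear_combination (-1:ℝ) * hIH - (poch (-(N:ℝ)) K * (L.factorial:ℝ)) * hN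

lemma binc_eq_poch (r : ℝ) (K : ℕ) : binc r K * K.factorial = (-1)^K * poch (-r) K := by
  induction K with
  | zero => simp [binc_zero, poch_zero]
  | succ K ih =>
    have hK1 : ((K:ℝ)+1) ≠ 0 := by positivity
    rw [binc_succ, poch_succ]
    push_cast [Nat.factorial_succ]
    field_simp
    linear_combination (r - (K:ℝ)) * ih

lemma hasSum_binc_odd (r : ℝ) {x : ℝ} (hx : |x| < 1) :
    HasSum (fun j => binc r (2*j+1) * x ^ (2*j+1)) (((1+x)^r - (1-x)^r)/2) := by
  have hnx : |(-x)| < 1 := by rwa [abs_neg]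
  have h1 := hasSum_binc r hx
  have h2 := hasSum_binc r hnx
  rw [show (1 + -x) = 1 - x by ring] at h2
  have h3 := (h1.sub h2).div_const 2
  have hinj : Function.Injective (fun j : ℕ => 2*j+1) := by
    intro a b hab; simpa using hab
  have hzero : ∀ k ∉ Set.range (fun j : ℕ => 2*j+1),
      (binc r k * x^k - binc r k * (-x)^k)/2 = 0 := by
    intro k hk
    have hev : Even k := by
      rcases Nat.even_or_odd k with h | h
      · exact h
      · exfalso; obtain ⟨t, ht⟩ := h; exact hk ⟨t, by simpa using ht.symm⟩
    rw [hev.neg_pow]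
    ring
  have hfun : (fun k => (binc r k * x^k - binc r k * (-x)^k)/2) ∘ (fun j : ℕ => 2*j+1)
      = fun j => binc r (2*j+1) * x^(2*j+1) := by
    funext j
    have hodd : Odd (2*j+1) := ⟨j, by ring⟩
    simp only [Function.comp]
    rw [hodd.neg_pow]
    ring
  have := (hinj.hasSum_iff hzero).2 h3
  rw [hfun] at this
  exact this

lemma poch_one (a : ℝ) : poch a 1 = a := by
  rw [show (1:ℕ) = 0+1 from rfl, poch_succ, poch_zero]; simp

lemma poch_one_fac (n : ℕ) : poch 1 n = n.factorial := by
  induction n with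
  | zero => simp [poch_zero]
  | succ n ih => rw [poch_succ, ih, Nat.factorial_succ]; push_cast; ring

lemma poch_two_fac (n : ℕ) : poch 2 n = (n+1).factorial := by
  induction n with
  | zero => simp [poch_zero]
  | succ n ih =>
    rw [poch_succ, ih, show ((n+1)+1).factorial = ((n+1)+1) * (n+1).factorial from
      Nat.factorial_succ _]
    push_cast; ring

lemma fac_odd (n : ℕ) : poch (3/2) n * (n.factorial : ℝ) * 4^n = (2*n+1).factorial := by
  have h := poch_dup 1 n
  rw [show (2:ℝ)*1 = 2 by norm_num, show (1:ℝ) + 1/2 = 3/2 by norm_num, poch_one_fac,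
    poch_two_fac] at h
  calc poch (3/2) n * (n.factorial : ℝ) * 4^n
      = (n.factorial : ℝ) * poch (3/2) n * 4^n := by ring
    _ = ((2*n+1).factorial : ℝ) := by rw [h]

lemma poch32_fac_ne (n : ℕ) : poch (3/2) n * (n.factorial : ℝ) ≠ 0 := by
  have h1 : (0:ℝ) < poch (3/2) n := poch_pos (by norm_num) n
  have h2 : (0:ℝ) < (n.factorial : ℝ) := by positivity
  positivity

lemma cn_eq (d : ℝ) (n : ℕ) :
    poch d n * poch (d+1/2) n / (poch (3/2) n * n.factorial)
      = poch (2*d) (2*n) / (2*n+1).factorial := by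
  have h1 : (0:ℝ) < poch (3/2) n := poch_pos (by norm_num) n
  have h2 : (0:ℝ) < (n.factorial : ℝ) := by positivity
  have h3 : (0:ℝ) < (((2*n+1).factorial : ℕ) : ℝ) := by positivity
  rw [div_eq_div_iff (by positivity) (by positivity)]
  have hdup := poch_dup d n
  have hfac := fac_odd n
  linear_combination (- (poch d n * poch (d+1/2) n)) * hfac
    + (poch (3/2) n * (n.factorial:ℝ)) * hdup

lemma coeff_id (d : ℝ) (hd : (1:ℝ) - 2*d ≠ 0) (m j : ℕ) :
    poch d (m+j) * poch (d+1/2) (m+j) / (poch (3/2) (m+j) * (m+j).factorial)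
        * poch (-((m+j:ℕ):ℝ)) m * poch (-((m+j:ℕ):ℝ) - 1/2) m
      = poch d m * poch (d-1/2) m / (1-2*d) * binc (1-2*d-2*m) (2*j+1) := by
  set n : ℕ := m + j with hn
  have hF1 : (0:ℝ) < (((2*n+1).factorial : ℕ) : ℝ) := by positivity
  have hF2 : (0:ℝ) < (((2*j+1).factorial : ℕ) : ℝ) := by positivity
  have h4m : (0:ℝ) < (4:ℝ)^m := by positivity
  -- hA : product of the two shifted pochs
  have hA : poch (-((n:ℕ):ℝ) - 1/2) m * poch (-((n:ℕ):ℝ)) m * 4^m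
      = poch (-(((2*n+1:ℕ)):ℝ)) (2*m) := by
    have h := poch_dup (-((n:ℕ):ℝ) - 1/2) m
    rw [show -((n:ℕ):ℝ) - 1/2 + 1/2 = -((n:ℕ):ℝ) by ring] at h
    rw [show (2:ℝ) * (-((n:ℕ):ℝ) - 1/2) = -(((2*n+1:ℕ)):ℝ) by push_cast; ring] at h
    exact h
  have hB : poch (-(((2*n+1:ℕ)):ℝ)) (2*m) * (((2*j+1).factorial : ℕ) : ℝ)
      = (((2*n+1).factorial : ℕ) : ℝ) := by
    have h := poch_neg_fac (2*m) (2*j+1) (2*n+1) (by omega)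
    rw [show ((-1:ℝ))^(2*m) = 1 by rw [pow_mul]; norm_num] at h
    rw [h, one_mul]
  have hP5 : binc (1-2*d-2*m) (2*j+1) * (((2*j+1).factorial : ℕ) : ℝ)
      = - poch (2*d+2*m-1) (2*j+1) := by
    have h := binc_eq_poch (1-2*d-2*m) (2*j+1)
    rw [show -((1:ℝ)-2*d-2*m) = 2*d+2*m-1 by push_cast; ring] at h
    rw [h, pow_succ, pow_mul]
    norm_num
  have hP6 : poch (d-1/2) m * poch d m * 4^m = poch (2*d-1) (2*m) := by
    have h := poch_dup (d-1/2) m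
    rw [show d - 1/2 + 1/2 = d by ring, show (2:ℝ)*(d-1/2) = 2*d-1 by ring] at h
    exact h
  have hZY : poch (2*d-1) (2*m) * poch (2*d+2*m-1) (2*j+1)
      = (2*d-1) * poch (2*d) (2*n) := by
    have h7 := poch_add (2*d-1) (2*m) (2*j+1)
    rw [show (2*d-1) + ((2*m:ℕ):ℝ) = 2*d+2*m-1 by push_cast; ring] at h7
    have h8 := poch_add (2*d-1) 1 (2*n)
    rw [poch_one, show (2*d-1) + ((1:ℕ):ℝ) = 2*d by push_cast; ring] at h8
    rw [show 2*m + (2*j+1) = 1 + 2*n by omega] at h7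
    rw [← h7, h8]
  -- both sides times F2 * 4^m equal poch (2d) (2n)
  have e_lhs : (poch d n * poch (d+1/2) n / (poch (3/2) n * n.factorial)
        * poch (-((n:ℕ):ℝ)) m * poch (-((n:ℕ):ℝ) - 1/2) m)
        * (((2*j+1).factorial : ℕ) : ℝ) * 4^m = poch (2*d) (2*n) := by
    have hF1' : (((2*n+1).factorial : ℕ) : ℝ) ≠ 0 := hF1.ne'
    rw [cn_eq, div_mul_eq_mul_div, div_mul_eq_mul_div, div_mul_eq_mul_div,
      div_mul_eq_mul_div, div_eq_iff hF1']
    linear_combination (poch (2*d) (2*n) * (((2*j+1).factorial : ℕ) : ℝ)) * hA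
      + (poch (2*d) (2*n)) * hB
  have e_rhs : (poch d m * poch (d-1/2) m / (1-2*d) * binc (1-2*d-2*m) (2*j+1))
        * (((2*j+1).factorial : ℕ) : ℝ) * 4^m = poch (2*d) (2*n) := by
    rw [div_mul_eq_mul_div, div_mul_eq_mul_div, div_mul_eq_mul_div, div_eq_iff hd]
    linear_combination (poch d m * poch (d-1/2) m * (4:ℝ)^m) * hP5
      - (poch (2*d+2*m-1) (2*j+1)) * hP6
      + (-1 : ℝ) * hZY
  have hth := e_lhs.trans e_rhs.symm
  have h1 := mul_right_cancel₀ h4m.ne' hth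
  exact mul_right_cancel₀ hF2.ne' h1

lemma key_hasSum (d : ℝ) (hd : (1:ℝ) - 2*d ≠ 0) (m : ℕ) {x : ℝ} (hx : |x| < 1) :
    HasSum (fun n : ℕ => poch d n * poch (d+1/2) n / (poch (3/2) n * n.factorial)
        * poch (-(n:ℝ)) m * poch (-(n:ℝ) - 1/2) m * x ^ (2*n+1))
      (poch d m * poch (d-1/2) m * x^(2*m) / (1-2*d)
        * (((1+x)^((1:ℝ)-2*d-2*m) - (1-x)^((1:ℝ)-2*d-2*m))/2)) := by
  have hodd := hasSum_binc_odd (1-2*d-2*m) hx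
  have hC := hodd.mul_left (poch d m * poch (d-1/2) m * x^(2*m) / (1-2*d))
  set f : ℕ → ℝ := fun n => poch d n * poch (d+1/2) n / (poch (3/2) n * n.factorial)
      * poch (-(n:ℝ)) m * poch (-(n:ℝ) - 1/2) m * x ^ (2*n+1) with hf
  have hinj : Function.Injective (fun j : ℕ => m + j) := fun a b h => by simpa using h
  have hzero : ∀ n ∉ Set.range (fun j : ℕ => m + j), f n = 0 := by
    intro n hn
    have hnm : n < m := by
      by_contra h
      exact hn ⟨n - m, show m + (n - m) = n by omega⟩
    rw [hf]
    simp only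
    rw [poch_neg_zero hnm]
    ring
  have hcomp : (f ∘ fun j : ℕ => m + j) = fun j =>
      (poch d m * poch (d-1/2) m * x^(2*m) / (1-2*d))
        * (binc (1-2*d-2*m) (2*j+1) * x^(2*j+1)) := by
    funext j
    simp only [Function.comp, hf]
    rw [show 2*(m+j)+1 = 2*m + (2*j+1) by ring, pow_add]
    linear_combination (x^(2*m) * x^(2*j+1)) * coeff_id d hd m j
  rw [← hcomp] at hC
  exact (hinj.hasSum_iff hzero).1 hC

/-- Malani's generating relation (with `(A_m)` eventually zero). -/
theorem stmt10 (d y : ℝ) (hd : d ≠ 1/2) (A : ℕ → ℝ) (hA : ∃ N, ∀ m, N ≤ m → A m = 0)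
    (x : ℝ) (hx0 : 0 < |x|) (hx : |x| < 1) :
    ∑' n : ℕ, (poch d n * poch (d + 1/2) n / (poch (3/2) n * n.factorial)) * x ^ (2 * n)
        * ∑ m ∈ range (n + 1),
            A m * poch (-(n : ℝ)) m * poch (-(n : ℝ) - 1/2) m / m.factorial * y ^ m
      = (1 / (2 * x * (1 - 2 * d))) * (1 + x) ^ (1 - 2 * d)
          * ∑' n : ℕ, A n * poch d n * poch (d - 1/2) n / n.factorial
              * (x ^ 2 * y / (1 + x) ^ 2) ^ n
        - (1 / (2 * x * (1 - 2 * d))) * (1 - x) ^ (1 - 2 * d)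
          * ∑' n : ℕ, A n * poch d n * poch (d - 1/2) n / n.factorial
              * (x ^ 2 * y / (1 - x) ^ 2) ^ n := by
  obtain ⟨N, hN⟩ := hA
  have hxne : x ≠ 0 := fun h => by simp [h] at hx0
  have hd' : (1:ℝ) - 2*d ≠ 0 := fun h => hd (by linarith)
  have hx1 : (0:ℝ) < 1 + x := by have := abs_lt.1 hx; linarith [this.1]
  have hx2 : (0:ℝ) < 1 - x := by have := abs_lt.1 hx; linarith [this.2]
  set c : ℕ → ℝ := fun m => A m * y^m / (m.factorial : ℝ) with hc
  set g : ℕ → ℕ → ℝ := fun m n => poch d n * poch (d+1/2) n / (poch (3/2) n * n.factorial)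
      * poch (-(n:ℝ)) m * poch (-(n:ℝ) - 1/2) m * x ^ (2*n) with hg
  have hkey : ∀ m : ℕ, HasSum (g m) (poch d m * poch (d-1/2) m * x^(2*m) / (1-2*d)
        * (((1+x)^((1:ℝ)-2*d-2*m) - (1-x)^((1:ℝ)-2*d-2*m))/2) / x) := by
    intro m
    have h := (key_hasSum d hd' m hx).mul_right x⁻¹
    have hfun : (fun n : ℕ => poch d n * poch (d+1/2) n / (poch (3/2) n * n.factorial)
        * poch (-(n:ℝ)) m * poch (-(n:ℝ) - 1/2) m * x ^ (2*n+1) * x⁻¹) = g m := by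
      funext n
      rw [hg]
      simp only
      rw [pow_succ, ← mul_assoc, mul_inv_cancel_right₀ hxne]
    rw [hfun, div_eq_mul_inv] at h
    exact h
  have hpt : ∀ n : ℕ, (poch d n * poch (d + 1/2) n / (poch (3/2) n * n.factorial)) * x ^ (2 * n)
        * ∑ m ∈ range (n + 1),
            A m * poch (-(n : ℝ)) m * poch (-(n : ℝ) - 1/2) m / m.factorial * y ^ m
      = ∑ m ∈ range N, c m * g m n := by
    intro n
    have hinner : (∑ m ∈ range (n+1),
          A m * poch (-(n:ℝ)) m * poch (-(n:ℝ) - 1/2) m / m.factorial * y^m)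
        = ∑ m ∈ range N, A m * poch (-(n:ℝ)) m * poch (-(n:ℝ) - 1/2) m / m.factorial * y^m := by
      rcases le_or_gt (n+1) N with h | h
      · apply Finset.sum_subset (Finset.range_subset_range.2 h)
        intro m hm hm'
        have hnm : n < m := by simp only [Finset.mem_range] at hm'; omega
        rw [poch_neg_zero hnm]; ring
      · symm
        apply Finset.sum_subset (Finset.range_subset_range.2 (by omega))
        intro m hm hm'
        have hNm : N ≤ m := by simp only [Finset.mem_range] at hm'; omega
        rw [hN m hNm]; ring
    rw [hinner, Finset.mul_sum]
    apply Finset.sum_congr rfl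
    intro m _
    rw [hc, hg]
    simp only
    ring
  have hsm : ∀ m ∈ range N, Summable (fun n => c m * g m n) :=
    fun m _ => ((hkey m).summable.mul_left _)
  rw [tsum_congr hpt, Summable.tsum_finsetSum hsm]
  have hsum_eq : ∀ m ∈ range N, (∑' n, c m * g m n)
      = c m * (poch d m * poch (d-1/2) m * x^(2*m) / (1-2*d)
        * (((1+x)^((1:ℝ)-2*d-2*m) - (1-x)^((1:ℝ)-2*d-2*m))/2) / x) :=
    fun m _ => ((hkey m).mul_left (c m)).tsum_eq
  rw [Finset.sum_congr rfl hsum_eq]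
  have hr1 : (∑' n : ℕ, A n * poch d n * poch (d - 1/2) n / n.factorial
        * (x ^ 2 * y / (1 + x) ^ 2) ^ n)
      = ∑ n ∈ range N, A n * poch d n * poch (d - 1/2) n / n.factorial
        * (x ^ 2 * y / (1 + x) ^ 2) ^ n :=
    tsum_eq_sum (fun b hb => by
      rw [hN b (le_of_not_gt (by simpa using hb))]; ring)
  have hr2 : (∑' n : ℕ, A n * poch d n * poch (d - 1/2) n / n.factorial
        * (x ^ 2 * y / (1 - x) ^ 2) ^ n)
      = ∑ n ∈ range N, A n * poch d n * poch (d - 1/2) n / n.factorial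
        * (x ^ 2 * y / (1 - x) ^ 2) ^ n :=
    tsum_eq_sum (fun b hb => by
      rw [hN b (le_of_not_gt (by simpa using hb))]; ring)
  rw [hr1, hr2, Finset.mul_sum, Finset.mul_sum, ← Finset.sum_sub_distrib]
  apply Finset.sum_congr rfl
  intro m _
  have e1 : (1+x)^((1:ℝ)-2*d-2*m) * (1+x)^(2*m) = (1+x)^((1:ℝ)-2*d) := by
    rw [← Real.rpow_natCast (1+x) (2*m), ← Real.rpow_add hx1]
    congr 1; push_cast; ring
  have e2 : (1-x)^((1:ℝ)-2*d-2*m) * (1-x)^(2*m) = (1-x)^((1:ℝ)-2*d) := by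
    rw [← Real.rpow_natCast (1-x) (2*m), ← Real.rpow_add hx2]
    congr 1; push_cast; ring
  have hpow1 : (x^2*y/(1+x)^2)^m = x^(2*m) * y^m / (1+x)^(2*m) := by
    rw [div_pow, mul_pow, ← pow_mul, ← pow_mul]
  have hpow2 : (x^2*y/(1-x)^2)^m = x^(2*m) * y^m / (1-x)^(2*m) := by
    rw [div_pow, mul_pow, ← pow_mul, ← pow_mul]
  rw [hpow1, hpow2, hc]
  simp only
  have hE1 : ((1+x):ℝ)^(2*m) ≠ 0 := by positivity
  have hE2 : ((1-x):ℝ)^(2*m) ≠ 0 := by positivity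
  have hfm : (m.factorial : ℝ) ≠ 0 := by positivity
  set q1 := poch d m with hq1
  set q2 := poch (d - 1/2) m with hq2
  set p1 := (1+x)^((1:ℝ)-2*d-2*(m:ℕ)) with hp1
  set p2 := (1-x)^((1:ℝ)-2*d-2*(m:ℕ)) with hp2
  set P1 := (1+x)^((1:ℝ)-2*d) with hP1
  set P2 := (1-x)^((1:ℝ)-2*d) with hP2
  field_simp
  linear_combination
    (A m * y^m * q1 * q2 * ((1-x):ℝ)^(2*m)) * e1
    - (A m * y^m * q1 * q2 * ((1+x):ℝ)^(2*m)) * e2
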